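/- Precision of ideal proxy objects: let Π be the points-to set computed by the static analysis with all code available (Π_miss = ∅, analyzing both program and library statements). Then (i) for program allocation o ∈ O_P, x↪o ∈ Π̃* implies x↪o ∈ Π, and (ii) for ideal proxy p̃ = φ̃(ō) with ō allocated at library site o ∈ O_L, x↪p̃ ∈ Π̃* implies x↪o ∈ Π. -/
import Mathlib


/-- Events (statement steps): allocation, assignment, load, store, and library
call (which assigns the returned concrete object `c` to `x`). -/
inductive Ev (V F M O CO : Type) where
  | alloc (x : V) (o : O) (c : CO)
  | assign (x y : V)
  | load (x y : V) (f : F)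
  | store (x : V) (f : F) (y : V)
  | call (x : V) (m : M) (y : V) (c : CO)

/-- A state: environment and heap. -/
structure St (V F CO : Type) where
  env : V → Option CO
  heap : CO → F → Option CO

/-- Small-step semantics of a single statement. Since only program code is
modeled (library effects appear only as call-return events), all heap writes use
program fields: the disjoint fields assumption is built in. -/
def step {V F M O CO : Type} [DecidableEq V] [DecidableEq F] [DecidableEq CO]
    (σ : St V F CO) : Ev V F M O CO → St V F CO
  | .alloc x _ c => ⟨Function.update σ.env x (some c), σ.heap⟩
  | .assign x y => ⟨Function.update σ.env x (σ.env y), σ.heap⟩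
  | .load x y f => ⟨Function.update σ.env x (σ.env y >>= fun c => σ.heap c f), σ.heap⟩
  | .store x f y =>
      ⟨σ.env, fun c g => if σ.env x = some c ∧ g = f then σ.env y else σ.heap c g⟩
  | .call x _ _ c => ⟨Function.update σ.env x (some c), σ.heap⟩

def runs {V F M O CO : Type} [DecidableEq V] [DecidableEq F] [DecidableEq CO]
    (σ0 : St V F CO) (tr : List (Ev V F M O CO)) : St V F CO :=
  tr.foldl step σ0

/-- The state reached after the first `i` steps of the trace. -/
def stateAt {V F M O CO : Type} [DecidableEq V] [DecidableEq F] [DecidableEq CO]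
    (σ0 : St V F CO) (tr : List (Ev V F M O CO)) (i : ℕ) : St V F CO :=
  runs σ0 (tr.take i)

/-- The dynamic footprint of a concrete object `c`: the set of visible variables
that ever point to `c` during the execution. This is the ideal proxy object of a
concrete object allocated in missing code. -/
def footprint {V F M O CO : Type} [DecidableEq V] [DecidableEq F] [DecidableEq CO]
    (σ0 : St V F CO) (tr : List (Ev V F M O CO)) (c : CO) : Set V :=
  {v | ∃ i, (stateAt σ0 tr i).env v = some c}

/-- The points-to relation `Π̃*`: the least relation over abstract objects
`O ⊕ Set V` (program allocation sites and ideal proxy objects) closed under the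
static rules and containing all missing edges `Π̃*_miss`, i.e. the edges arising
at library-call assignments during the execution (rules `missProg` and
`missProxy`). -/
inductive PDerives {V F M O CO : Type} [DecidableEq V] [DecidableEq F] [DecidableEq CO]
    (σ0 : St V F CO) (tr : List (Ev V F M O CO)) : V → O ⊕ Set V → Prop where
  | alloc {x o c} : Ev.alloc x o c ∈ tr → PDerives σ0 tr x (Sum.inl o)
  | assign {x y a} : Ev.assign x y ∈ tr → PDerives σ0 tr y a → PDerives σ0 tr x a
  | loadstore {x y z w : V} {f : F} {a a' : O ⊕ Set V} :
      Ev.load x y f ∈ tr → Ev.store z f w ∈ tr →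
      PDerives σ0 tr y a' → PDerives σ0 tr z a' → PDerives σ0 tr w a →
      PDerives σ0 tr x a
  | missProg {x : V} {m : M} {y x' : V} {o : O} {c : CO} :
      Ev.call x m y c ∈ tr → Ev.alloc x' o c ∈ tr → PDerives σ0 tr x (Sum.inl o)
  | missProxy {x : V} {m : M} {y : V} {c : CO} :
      Ev.call x m y c ∈ tr → (∀ (x' : V) (o : O), Ev.alloc x' o c ∉ tr) →
      PDerives σ0 tr x (Sum.inr (footprint σ0 tr c))

lemma stateAt_succ {V F M O CO : Type} [DecidableEq V] [DecidableEq F] [DecidableEq CO]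
    (σ0 : St V F CO) (tr : List (Ev V F M O CO)) (i : ℕ) :
    stateAt σ0 tr (i + 1) =
      (tr[i]?.elim (stateAt σ0 tr i) (step (stateAt σ0 tr i))) := by
  unfold stateAt runs
  rw [List.take_succ]
  cases h : tr[i]? with
  | none => simp
  | some e => simp [List.foldl_append]

lemma stateAt_succ_of_getElem {V F M O CO : Type} [DecidableEq V] [DecidableEq F]
    [DecidableEq CO] (σ0 : St V F CO) (tr : List (Ev V F M O CO)) {i : ℕ}
    {e : Ev V F M O CO} (h : tr[i]? = some e) :
    stateAt σ0 tr (i + 1) = step (stateAt σ0 tr i) e := by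
  rw [stateAt_succ, h]; rfl

/-- Precision of ideal proxy objects: let `Pi` be a points-to set
computed with all code available, i.e. a set over `OP ⊕ OL` (program and library
allocation sites) closed under the static rules for the statements of the trace
and containing (by its soundness) all edges of `Π̃*_miss`, where a library-call
return of a library-allocated object `c` contributes the edge to `c`'s library
allocation site `lsite c`. Then (i) for program sites `o`, `x ↪ o ∈ Π̃*` implies
`(x, o) ∈ Pi`, and (ii) for an ideal proxy `p̃ = footprint c` of a
library-allocated `c`, `x ↪ p̃ ∈ Π̃*` implies `(x, lsite c) ∈ Pi`. -/
theorem stmt12 {V F M OP OL CO : Type} [DecidableEq V] [DecidableEq F] [DecidableEq CO]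
    (σ0 : St V F CO)
    (hEnv : ∀ v, σ0.env v = none) (hHeap : ∀ c f, σ0.heap c f = none)
    (tr : List (Ev V F M OP CO))
    (hFresh : ∀ i x o c, tr[i]? = some (.alloc x o c) →
      (∀ v, (stateAt σ0 tr i).env v ≠ some c) ∧
      (∀ c' f, (stateAt σ0 tr i).heap c' f ≠ some c))
    (hUniq : ∀ (i j : ℕ) (x x' : V) (o o' : OP) (c : CO),
      tr[i]? = some (Ev.alloc x o c) → tr[j]? = some (Ev.alloc x' o' c) → i = j)
    (lsite : CO → OL)
    (Pi : Set (V × (OP ⊕ OL)))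
    (hAlloc : ∀ (x : V) (o : OP) (c : CO), Ev.alloc x o c ∈ tr → (x, Sum.inl o) ∈ Pi)
    (hAssign : ∀ (x y : V) (a : OP ⊕ OL), Ev.assign x y ∈ tr → (y, a) ∈ Pi → (x, a) ∈ Pi)
    (hLS : ∀ (x y z w : V) (f : F) (a a' : OP ⊕ OL),
      Ev.load x y f ∈ tr → Ev.store z f w ∈ tr →
      (y, a') ∈ Pi → (z, a') ∈ Pi → (w, a) ∈ Pi → (x, a) ∈ Pi)
    (hMissProg : ∀ (x : V) (m : M) (y x' : V) (o : OP) (c : CO),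
      Ev.call x m y c ∈ tr → Ev.alloc x' o c ∈ tr → (x, Sum.inl o) ∈ Pi)
    (hMissLib : ∀ (x : V) (m : M) (y : V) (c : CO),
      Ev.call x m y c ∈ tr → (∀ (x' : V) (o : OP), Ev.alloc x' o c ∉ tr) →
      (x, Sum.inr (lsite c)) ∈ Pi) :
    (∀ (x : V) (o : OP), PDerives σ0 tr x (Sum.inl o) → (x, Sum.inl o) ∈ Pi) ∧
    (∀ (x : V) (c : CO), (∀ (x' : V) (o : OP), Ev.alloc x' o c ∉ tr) →
      PDerives σ0 tr x (Sum.inr (footprint σ0 tr c)) →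
      (x, Sum.inr (lsite c)) ∈ Pi) := by
  classical
  -- Abstract object of a concrete object: its program allocation site if it was
  -- allocated by the program, otherwise its library site.
  set absOf : CO → OP ⊕ OL := fun c =>
    if h : ∃ p : V × OP, Ev.alloc p.1 p.2 c ∈ tr then Sum.inl (Classical.choose h).2
    else Sum.inr (lsite c) with habsOf
  have habs1 : ∀ (c : CO) (x : V) (o : OP), Ev.alloc x o c ∈ tr → absOf c = Sum.inl o := by
    intro c x o hmem
    have hex : ∃ p : V × OP, Ev.alloc p.1 p.2 c ∈ tr := ⟨(x, o), hmem⟩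
    have hsp := Classical.choose_spec hex
    obtain ⟨i, hi⟩ := List.mem_iff_getElem?.mp hmem
    obtain ⟨j, hj⟩ := List.mem_iff_getElem?.mp hsp
    have hij : i = j := hUniq i j x (Classical.choose hex).1 o (Classical.choose hex).2 c hi hj
    rw [hij, hj] at hi
    have : Ev.alloc (Classical.choose hex).1 (Classical.choose hex).2 c
        = Ev.alloc x o c (M := M) (F := F) := by exact Option.some.inj hi
    simp only [habsOf, dif_pos hex]
    cases this; rfl
  have habs2 : ∀ c : CO, (∀ (x : V) (o : OP), Ev.alloc x o c ∉ tr) →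
      absOf c = Sum.inr (lsite c) := by
    intro c hno
    have hex : ¬ ∃ p : V × OP, Ev.alloc p.1 p.2 c ∈ tr := by
      rintro ⟨p, hp⟩; exact hno p.1 p.2 hp
    simp only [habsOf, dif_neg hex]
  -- Soundness of `Pi` w.r.t. the dynamic semantics.
  have sound : ∀ i : ℕ,
      (∀ (v : V) (c : CO), (stateAt σ0 tr i).env v = some c → (v, absOf c) ∈ Pi) ∧
      (∀ (c : CO) (f : F) (c' : CO), (stateAt σ0 tr i).heap c f = some c' →
        ∃ z w : V, Ev.store z f w ∈ tr ∧ (z, absOf c) ∈ Pi ∧ (w, absOf c') ∈ Pi) := by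
    intro i
    induction i with
    | zero =>
        constructor
        · intro v c hv; rw [show stateAt σ0 tr 0 = σ0 from rfl] at hv
          rw [hEnv v] at hv; cases hv
        · intro c f c' hc; rw [show stateAt σ0 tr 0 = σ0 from rfl] at hc
          rw [hHeap c f] at hc; cases hc
    | succ i ih =>
        cases h : tr[i]? with
        | none =>
            rw [stateAt_succ, h]; exact ih
        | some e =>
            have hmem : e ∈ tr := List.mem_iff_getElem?.mpr ⟨i, h⟩
            rw [stateAt_succ_of_getElem σ0 tr h]
            cases e with
            | alloc x o c =>
                refine ⟨?_, ih.2⟩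
                intro v c' hv
                simp only [step] at hv
                by_cases hvx : v = x
                · subst hvx; rw [Function.update_self] at hv; cases hv
                  rw [habs1 c v o hmem]
                  exact hAlloc v o c hmem
                · rw [Function.update_of_ne hvx] at hv
                  exact ih.1 v c' hv
            | assign x y =>
                refine ⟨?_, ih.2⟩
                intro v c' hv
                simp only [step] at hv
                by_cases hvx : v = x
                · subst hvx; rw [Function.update_self] at hv
                  exact hAssign v y _ hmem (ih.1 y c' hv)
                · rw [Function.update_of_ne hvx] at hv
                  exact ih.1 v c' hv
            | load x y f =>
                refine ⟨?_, ih.2⟩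
                intro v c' hv
                simp only [step] at hv
                by_cases hvx : v = x
                · subst hvx; rw [Function.update_self] at hv
                  cases hy : (stateAt σ0 tr i).env y with
                  | none => rw [hy] at hv; simp at hv
                  | some cy =>
                      rw [hy] at hv
                      rw [show ((some cy >>= fun c => (stateAt σ0 tr i).heap c f)
                          = (stateAt σ0 tr i).heap cy f) from rfl] at hv
                      obtain ⟨z, w, hst, hz, hw⟩ := ih.2 cy f c' hv
                      exact hLS v y z w f _ _ hmem hst (ih.1 y cy hy) hz hw
                · rw [Function.update_of_ne hvx] at hv
                  exact ih.1 v c' hv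
            | store x f y =>
                refine ⟨ih.1, ?_⟩
                intro c g c' hc
                simp only [step] at hc
                split at hc
                · rename_i hcond
                  obtain ⟨hxc, hgf⟩ := hcond
                  subst hgf
                  exact ⟨x, y, hmem, ih.1 x c hxc, ih.1 y c' hc⟩
                · exact ih.2 c g c' hc
            | call x m y c =>
                refine ⟨?_, ih.2⟩
                intro v c' hv
                simp only [step] at hv
                by_cases hvx : v = x
                · subst hvx; rw [Function.update_self] at hv; cases hv
                  by_cases hex : ∃ p : V × OP, Ev.alloc p.1 p.2 c ∈ tr
                  · obtain ⟨⟨x', o⟩, hp⟩ := hex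
                    rw [habs1 c x' o hp]
                    exact hMissProg v m y x' o c hmem hp
                  · have hno : ∀ (x' : V) (o : OP), Ev.alloc x' o c ∉ tr := by
                      intro x' o hmem'; exact hex ⟨(x', o), hmem'⟩
                    rw [habs2 c hno]
                    exact hMissLib v m y c hmem hno
                · rw [Function.update_of_ne hvx] at hv
                  exact ih.1 v c' hv
  -- A call returning `c` puts its target variable into the footprint of `c`.
  have hcall_fp : ∀ (x : V) (m : M) (y : V) (c : CO), Ev.call x m y c ∈ tr →
      x ∈ footprint σ0 tr c := by
    intro x m y c hmem
    obtain ⟨i, hi⟩ := List.mem_iff_getElem?.mp hmem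
    refine ⟨i + 1, ?_⟩
    rw [stateAt_succ_of_getElem σ0 tr hi]
    simp [step, Function.update]
  -- Main induction on the derivation in `Π̃*`.
  have main : ∀ (x : V) (a : OP ⊕ Set V), PDerives σ0 tr x a →
      (∀ o : OP, a = Sum.inl o → (x, Sum.inl o) ∈ Pi) ∧
      (∀ S : Set V, a = Sum.inr S →
        (∃ c' : CO, (∀ (x' : V) (o : OP), Ev.alloc x' o c' ∉ tr) ∧
          footprint σ0 tr c' = S) ∧
        (∀ c : CO, (∀ (x' : V) (o : OP), Ev.alloc x' o c ∉ tr) →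
          footprint σ0 tr c = S → (x, Sum.inr (lsite c)) ∈ Pi)) := by
    intro x a hd
    induction hd with
    | @alloc x o c hmem =>
        refine ⟨?_, ?_⟩
        · rintro o' rfl'
          cases rfl'
          exact hAlloc x o c hmem
        · rintro S hS; cases hS
    | @assign x y a hmem _ ih =>
        refine ⟨?_, ?_⟩
        · rintro o rfl
          exact hAssign x y _ hmem (ih.1 o rfl)
        · rintro S rfl
          refine ⟨(ih.2 S rfl).1, ?_⟩
          intro c hno hfp
          exact hAssign x y _ hmem ((ih.2 S rfl).2 c hno hfp)
    | @loadstore x y z w f a a' hload hstore _ _ _ ihy ihz ihw =>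
        -- get a common `Pi` edge for `y` and `z` from `a'`
        have hedge : ∃ b : OP ⊕ OL, (y, b) ∈ Pi ∧ (z, b) ∈ Pi := by
          cases a' with
          | inl o' => exact ⟨Sum.inl o', ihy.1 o' rfl, ihz.1 o' rfl⟩
          | inr S' =>
              obtain ⟨c', hno', hfp'⟩ := (ihy.2 S' rfl).1
              exact ⟨Sum.inr (lsite c'), (ihy.2 S' rfl).2 c' hno' hfp',
                (ihz.2 S' rfl).2 c' hno' hfp'⟩
        obtain ⟨b, hyb, hzb⟩ := hedge
        refine ⟨?_, ?_⟩
        · rintro o rfl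
          exact hLS x y z w f _ b hload hstore hyb hzb (ihw.1 o rfl)
        · rintro S rfl
          refine ⟨(ihw.2 S rfl).1, ?_⟩
          intro c hno hfp
          exact hLS x y z w f _ b hload hstore hyb hzb ((ihw.2 S rfl).2 c hno hfp)
    | @missProg x m y x' o c hcall halloc =>
        refine ⟨?_, ?_⟩
        · rintro o' rfl'
          cases rfl'
          exact hMissProg x m y x' o c hcall halloc
        · rintro S hS; cases hS
    | @missProxy x m y c hcall hno =>
        refine ⟨?_, ?_⟩
        · rintro o hS; cases hS
        · rintro S hS
          cases hS
          refine ⟨⟨c, hno, rfl⟩, ?_⟩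
          intro c2 hno2 hfp2
          -- `x` is in the footprint of `c`, hence of `c2`; apply soundness.
          have hx : x ∈ footprint σ0 tr c2 := by
            rw [hfp2]; exact hcall_fp x m y c hcall
          obtain ⟨i, hi⟩ := hx
          have := (sound i).1 x c2 hi
          rwa [habs2 c2 hno2] at this
  refine ⟨?_, ?_⟩
  · intro x o hd; exact (main x _ hd).1 o rfl
  · intro x c hno hd
    exact ((main x _ hd).2 (footprint σ0 tr c) rfl).2 c hno rfl
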